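/- Suppose (Λ_n) satisfies Condition (D^Λ) and fix 1 ≤ j ≤ q. Then 𝓛_j is a subgroup (lattice) of ℤ^k. Moreover, with D_{l_1},…,D_{l_{b_j}} the distinct sets of the form ((D_j)_{−z})⁺ for z ∈ D_j \ 𝓖_j, and z_{l_i} ∈ D_j chosen with D_{l_i} = ((D_j)_{−z_{l_i}})⁺, one has the partition D_j = 𝓛_j⁺ ∪ ⋃_{i=1}^{b_j} ((𝓛_{l_i})_{z_{l_i}})⁺ (the sets on the right being pairwise disjoint). Furthermore 𝓛_{l_i} ⊇ 𝓛_j and the lattices 𝓛_{l_i} and 𝓛_j have the same rank for every i = 1,…,b_j. Finally, D_j is bounded if and only if 𝓛_j = {0}, and in that case D_j = {z_{l_1},…,z_{l_{b_j}}}. -/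

import Mathlib

open scoped Classical Pointwise
open Filter Set

namespace Paper

/-- The index space `ℤ^k`. -/
abbrev V (k : ℕ) := Fin k → ℤ

variable {k : ℕ}

/-- Translate of a set: `(A)_t = {a + t : a ∈ A}`. -/
def tr (A : Set (V k)) (t : V k) : Set (V k) := (fun a => a + t) '' A

/-- Positive part of a set with respect to the order `prec`: `A⁺ = {a ∈ A : 0 ≺ a}`. -/
def posPart (prec : V k → V k → Prop) (A : Set (V k)) : Set (V k) := {a ∈ A | prec 0 a}

/-- The hypercube `K_c = ([-c,c] ∩ ℤ)^k`. -/
def Kc (k c : ℕ) : Set (V k) := {t : V k | ∀ i, |t i| ≤ (c : ℤ)}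

/-- `Λ^{(t,c)} = ((Λ)_{-t} ∩ K_c)⁺`. -/
def window (prec : V k → V k → Prop) (Λ : Set (V k)) (t : V k) (c : ℕ) : Set (V k) :=
  posPart prec (tr Λ (-t) ∩ Kc k c)

/-- A translation-invariant total (strict) order on `ℤ^k`. -/
structure IsTransOrder (prec : V k → V k → Prop) : Prop where
  trans : ∀ {a b c : V k}, prec a b → prec b c → prec a c
  irrefl : ∀ a : V k, ¬ prec a a
  total : ∀ a b : V k, a ≠ b → prec a b ∨ prec b a
  invariant : ∀ a b i : V k, prec a b → prec (a + i) (b + i)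

/-- Condition `(D^Λ)`: the index sets `Λ_n`, the asymptotic sets `D_1, …, D_q`
(`q ∈ ℕ ∪ {∞}`, indexed by `i : ℕ` with `(i : ℕ∞) < q`), and the weights. -/
structure CondD (k : ℕ) where
  prec : V k → V k → Prop
  ord : IsTransOrder prec
  Lam : ℕ → Finset (V k)
  card_top : Tendsto (fun n => (Lam n).card) atTop atTop
  q : ℕ∞
  D : ℕ → Set (V k)
  D_subset : ∀ i : ℕ, (i : ℕ∞) < q → D i ⊆ {t : V k | prec 0 t}
  D_ne : ∀ i j : ℕ, (i : ℕ∞) < q → (j : ℕ∞) < q → i ≠ j → D i ≠ D j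
  lamP : ℕ → ℕ → ℝ
  lam : ℕ → ℝ
  tendsto_lamP : ∀ i p : ℕ, (i : ℕ∞) < q →
    Tendsto (fun n =>
        (((Lam n).filter fun t => window prec (Lam n : Set (V k)) t p = D i ∩ Kc k p).card : ℝ) /
          ((Lam n).card : ℝ))
      atTop (nhds (lamP i p))
  tendsto_lam : ∀ i : ℕ, (i : ℕ∞) < q → Tendsto (fun p => lamP i p) atTop (nhds (lam i))
  lam_pos : ∀ i : ℕ, (i : ℕ∞) < q → 0 < lam i
  lam_sum : ∑' i : {i : ℕ // (i : ℕ∞) < q}, lam i.1 = 1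

/-- `((A)_{-z})⁺`, the shifted positive part of `A`. -/
def shiftPos (prec : V k → V k → Prop) (A : Set (V k)) (z : V k) : Set (V k) :=
  posPart prec (tr A (-z))

/-- `𝓖(A) = {z ∈ A ∪ {0} : ((A)_{-z})⁺ = A}`. -/
def Gset (prec : V k → V k → Prop) (A : Set (V k)) : Set (V k) :=
  {z ∈ insert (0 : V k) A | shiftPos prec A z = A}

/-- `𝓛(A) = 𝓖(A) ∪ (-𝓖(A))`. -/
def Lset (prec : V k → V k → Prop) (A : Set (V k)) : Set (V k) :=
  Gset prec A ∪ (-(Gset prec A))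

/-- The rank (as a free abelian group) of the subgroup of `ℤ^k` generated by `S`. -/
noncomputable def latticeRank (S : Set (V k)) : ℕ :=
  Module.finrank ℤ ↥(AddSubgroup.toIntSubmodule (AddSubgroup.closure S))


section Aux

variable {prec : V k → V k → Prop}

lemma mem_tr {A : Set (V k)} {t x : V k} : x ∈ tr A t ↔ x - t ∈ A := by
  constructor
  · rintro ⟨a, ha, rfl⟩; simpa using ha
  · intro h; exact ⟨x - t, h, by simp⟩

lemma mem_shiftPos {A : Set (V k)} {z x : V k} :
    x ∈ shiftPos prec A z ↔ x + z ∈ A ∧ prec 0 x := by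
  simp [shiftPos, posPart, mem_tr, sub_neg_eq_add]

lemma mem_window_iff {Λ : Set (V k)} {t s : V k} {c : ℕ} :
    s ∈ window prec Λ t c ↔ (s + t ∈ Λ ∧ s ∈ Kc k c) ∧ prec 0 s := by
  simp only [window, posPart, Set.mem_setOf_eq, Set.mem_inter_iff, mem_tr, sub_neg_eq_add]

lemma shiftPos_pos {A : Set (V k)} {z x : V k} (hx : x ∈ shiftPos prec A z) : prec 0 x :=
  (mem_shiftPos.mp hx).2

-- order helpers
lemma pos_add (h : IsTransOrder prec) {a b : V k} (ha : prec 0 a) (hb : prec 0 b) :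
    prec 0 (a + b) :=
  h.trans hb (by simpa [add_comm] using h.invariant 0 a b ha)

lemma sub_pos_iff (h : IsTransOrder prec) {a b : V k} : prec 0 (a - b) ↔ prec b a := by
  constructor
  · intro hx; simpa using h.invariant 0 (a - b) b hx
  · intro hx; simpa [sub_eq_add_neg] using h.invariant b a (-b) hx

lemma asymm (h : IsTransOrder prec) {a b : V k} (hab : prec a b) : ¬ prec b a :=
  fun hba => h.irrefl a (h.trans hab hba)

lemma trich (h : IsTransOrder prec) (a : V k) : a = 0 ∨ prec 0 a ∨ prec a 0 := by
  by_cases ha : a = 0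
  · exact Or.inl ha
  · rcases h.total 0 a (fun e => ha e.symm) with h1 | h1
    · exact Or.inr (Or.inl h1)
    · exact Or.inr (Or.inr h1)

lemma pos_nsmul (h : IsTransOrder prec) {g : V k} (hg : prec 0 g) :
    ∀ n : ℕ, 1 ≤ n → prec 0 (n • g) := by
  intro n hn
  induction n with
  | zero => omega
  | succ m ih =>
    rcases Nat.eq_or_lt_of_le hn with h1 | h1
    · simpa [← h1] using hg
    · have := ih (by omega)
      rw [succ_nsmul]
      exact pos_add h this hg

lemma shiftPos_shiftPos (h : IsTransOrder prec) {A : Set (V k)} {z x : V k}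
    (hx : x = 0 ∨ prec 0 x) :
    shiftPos prec (shiftPos prec A z) x = shiftPos prec A (z + x) := by
  ext s
  simp only [mem_shiftPos]
  constructor
  · rintro ⟨⟨h1, _⟩, h3⟩
    refine ⟨?_, h3⟩
    have : s + x + z = s + (z + x) := by abel
    rwa [this] at h1
  · rintro ⟨h1, h2⟩
    refine ⟨⟨?_, ?_⟩, h2⟩
    · have : s + (z + x) = s + x + z := by abel
      rwa [this] at h1
    · rcases hx with rfl | hx
      · simpa using h2
      · exact pos_add h h2 hx

lemma mem_Gset {A : Set (V k)} {x : V k} :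
    x ∈ Gset prec A ↔ (x = 0 ∨ x ∈ A) ∧ shiftPos prec A x = A := by
  simp [Gset]

lemma Gset_nonneg {A : Set (V k)} (hA : ∀ a ∈ A, prec 0 a) {x : V k}
    (hx : x ∈ Gset prec A) : x = 0 ∨ prec 0 x := by
  rcases (mem_Gset.mp hx).1 with h | h
  · exact Or.inl h
  · exact Or.inr (hA x h)

lemma shiftPos_zero {A : Set (V k)} (hA : ∀ a ∈ A, prec 0 a) :
    shiftPos prec A 0 = A := by
  ext x; simp only [mem_shiftPos, add_zero]
  exact ⟨fun h => h.1, fun h => ⟨h, hA x h⟩⟩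

lemma zero_mem_Gset {A : Set (V k)} (hA : ∀ a ∈ A, prec 0 a) :
    (0 : V k) ∈ Gset prec A :=
  mem_Gset.mpr ⟨Or.inl rfl, shiftPos_zero hA⟩

lemma Gset_add (h : IsTransOrder prec) {A : Set (V k)} (hA : ∀ a ∈ A, prec 0 a)
    {x y : V k} (hx : x ∈ Gset prec A) (hy : y ∈ Gset prec A) :
    x + y ∈ Gset prec A := by
  obtain ⟨hx1, hx2⟩ := mem_Gset.mp hx
  obtain ⟨hy1, hy2⟩ := mem_Gset.mp hy
  have hsh : shiftPos prec A (x + y) = A := by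
    rw [← shiftPos_shiftPos h (Gset_nonneg hA hy), hx2, hy2]
  refine mem_Gset.mpr ⟨?_, hsh⟩
  rcases hx1 with rfl | hx1
  · simpa using hy1
  · rcases hy1 with rfl | _
    · simpa using Or.inr hx1
    · -- x ∈ A, so x ∈ shiftPos A y = A means x + y ∈ A: use hy2 backwards
      have : x ∈ shiftPos prec A y := hy2.symm ▸ hx1
      exact Or.inr (mem_shiftPos.mp this).1

lemma Gset_translate {A : Set (V k)} {x d : V k} (hx : x ∈ Gset prec A) (hd : d ∈ A) :
    d + x ∈ A := by
  have h2 := (mem_Gset.mp hx).2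
  have : d ∈ shiftPos prec A x := h2.symm ▸ hd
  exact (mem_shiftPos.mp this).1

lemma Gset_translate_down {A : Set (V k)} {x d : V k} (hx : x ∈ Gset prec A)
    (hd : d ∈ A) (hpos : prec 0 (d - x)) : d - x ∈ A := by
  have h2 := (mem_Gset.mp hx).2
  have : d - x ∈ shiftPos prec A x := mem_shiftPos.mpr ⟨by simpa using hd, hpos⟩
  rwa [h2] at this

lemma Gset_nsmul (h : IsTransOrder prec) {A : Set (V k)} (hA : ∀ a ∈ A, prec 0 a)
    {x : V k} (hx : x ∈ Gset prec A) (n : ℕ) : n • x ∈ Gset prec A := by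
  induction n with
  | zero => simpa using zero_mem_Gset hA
  | succ m ih => rw [succ_nsmul]; exact Gset_add h hA ih hx

lemma Gset_sub (h : IsTransOrder prec) {A : Set (V k)} (hA : ∀ a ∈ A, prec 0 a)
    {x y : V k} (hx : x ∈ Gset prec A) (hy : y ∈ Gset prec A)
    (hpos : prec 0 (x - y)) : x - y ∈ Gset prec A := by
  have hsh : shiftPos prec A (x - y) = A := by
    have e1 : shiftPos prec A (y + (x - y)) = shiftPos prec A (x - y) := by
      rw [← shiftPos_shiftPos h (Or.inr hpos), (mem_Gset.mp hy).2]
    have e2 : y + (x - y) = x := by abel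
    rw [e2] at e1
    rw [← e1, (mem_Gset.mp hx).2]
  refine mem_Gset.mpr ⟨Or.inr ?_, hsh⟩
  rcases (mem_Gset.mp hx).1 with rfl | hxA
  · -- x = 0: 0 - y pos means prec y 0; but y nonneg: contradiction
    exfalso
    rcases Gset_nonneg hA hy with rfl | hy0
    · simp at hpos; exact h.irrefl 0 hpos
    · have : prec y 0 := (sub_pos_iff h).mp (by simpa using hpos)
      exact asymm h hy0 this
  · exact Gset_translate_down hy hxA hpos

lemma mem_Lset {A : Set (V k)} {x : V k} :
    x ∈ Lset prec A ↔ x ∈ Gset prec A ∨ -x ∈ Gset prec A := by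
  simp [Lset, Set.mem_neg]

/-- `𝓛(A)` is a subgroup. -/
def LsetSubgroup (h : IsTransOrder prec) (A : Set (V k)) (hA : ∀ a ∈ A, prec 0 a) :
    AddSubgroup (V k) where
  carrier := Lset prec A
  zero_mem' := mem_Lset.mpr (Or.inl (zero_mem_Gset hA))
  neg_mem' := by
    intro a ha
    rcases mem_Lset.mp ha with h1 | h1
    · exact mem_Lset.mpr (Or.inr (by simpa using h1))
    · exact mem_Lset.mpr (Or.inl h1)
  add_mem' := by
    intro a b ha hb
    have key : ∀ u v : V k, u ∈ Gset prec A → v ∈ Gset prec A →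
        u + -v ∈ Lset prec A := by
      intro u v hu hv
      rcases trich h (u + -v) with h1 | h1 | h1
      · rw [h1]; exact mem_Lset.mpr (Or.inl (zero_mem_Gset hA))
      · refine mem_Lset.mpr (Or.inl ?_)
        have : u - v = u + -v := by abel
        rw [← this]
        exact Gset_sub h hA hu hv (by rwa [this])
      · refine mem_Lset.mpr (Or.inr ?_)
        have e : -(u + -v) = v - u := by abel
        rw [e]
        refine Gset_sub h hA hv hu ?_
        have : prec 0 (0 - (u + -v)) := (sub_pos_iff h).mpr h1
        have e2 : (0 : V k) - (u + -v) = v - u := by abel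
        rwa [e2] at this
    rcases mem_Lset.mp ha with h1 | h1 <;> rcases mem_Lset.mp hb with h2 | h2
    · exact mem_Lset.mpr (Or.inl (Gset_add h hA h1 h2))
    · have := key a (-b) h1 h2
      simpa using this
    · have := key b (-a) h2 h1
      have e : b + - -a = a + b := by abel
      rwa [e] at this
    · refine mem_Lset.mpr (Or.inr ?_)
      have e : -(a + b) = -a + -b := by abel
      rw [e]
      exact Gset_add h hA h1 h2

end Aux

section Counting

variable {prec : V k → V k → Prop}

lemma mem_Kc {t : V k} {c : ℕ} : t ∈ Kc k c ↔ ∀ i, |t i| ≤ (c : ℤ) := Iff.rfl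

lemma Kc_mono {c c' : ℕ} (hcc : c ≤ c') : Kc k c ⊆ Kc k c' := by
  intro t ht i
  exact le_trans (ht i) (by exact_mod_cast hcc)

lemma mem_Kc_add {u v : V k} {c c' : ℕ} (hu : u ∈ Kc k c) (hv : v ∈ Kc k c') :
    u + v ∈ Kc k (c + c') := by
  intro i
  calc |(u + v) i| = |u i + v i| := rfl
  _ ≤ |u i| + |v i| := abs_add_le _ _
  _ ≤ (c : ℤ) + c' := add_le_add (hu i) (hv i)
  _ = ((c + c' : ℕ) : ℤ) := by push_cast; ring

lemma mem_Kc_sub {u v : V k} {c c' : ℕ} (hu : u ∈ Kc k c) (hv : v ∈ Kc k c') :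
    u - v ∈ Kc k (c + c') := by
  have hv' : -v ∈ Kc k c' := by intro i; simpa using hv i
  simpa [sub_eq_add_neg] using mem_Kc_add hu hv'

lemma exists_Kc_bound {ι : Type*} [Fintype ι] (f : ι → V k) :
    ∃ c : ℕ, ∀ a, f a ∈ Kc k c := by
  refine ⟨Finset.univ.sup fun a => Finset.univ.sup fun i => (f a i).natAbs, fun a => ?_⟩
  intro i
  have h1 : (f a i).natAbs ≤ Finset.univ.sup fun i => (f a i).natAbs :=
    Finset.le_sup (f := fun i => (f a i).natAbs) (Finset.mem_univ i)
  have h2 : (Finset.univ.sup fun i => (f a i).natAbs) ≤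
      Finset.univ.sup fun a => Finset.univ.sup fun i => (f a i).natAbs :=
    Finset.le_sup (f := fun a => Finset.univ.sup fun i => (f a i).natAbs) (Finset.mem_univ a)
  calc |f a i| = ((f a i).natAbs : ℤ) := Int.abs_eq_natAbs _
  _ ≤ _ := by exact_mod_cast h1.trans h2

lemma window_eq_iff (h : IsTransOrder prec) {D : Set (V k)} (hD : ∀ a ∈ D, prec 0 a)
    {Λ : Set (V k)} {t : V k} {c : ℕ} :
    window prec Λ t c = D ∩ Kc k c ↔
      ∀ s, prec 0 s → s ∈ Kc k c → (s + t ∈ Λ ↔ s ∈ D) := by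
  rw [Set.ext_iff]
  constructor
  · intro H s hs hsc
    have hh := H s
    simp only [mem_window_iff, Set.mem_inter_iff] at hh
    constructor
    · intro h1; exact (hh.mp ⟨⟨h1, hsc⟩, hs⟩).1
    · intro h1; exact (hh.mpr ⟨h1, hsc⟩).1.1
  · intro H s
    simp only [mem_window_iff, Set.mem_inter_iff]
    constructor
    · rintro ⟨⟨h1, h2⟩, h3⟩; exact ⟨(H s h3 h2).mp h1, h2⟩
    · rintro ⟨h1, h2⟩; exact ⟨⟨(H s (hD s h1) h2).mpr h1, h2⟩, hD s h1⟩

lemma window_eq_mono (h : IsTransOrder prec) {D : Set (V k)} (hD : ∀ a ∈ D, prec 0 a)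
    {Λ : Set (V k)} {t : V k} {p p' : ℕ} (hpp : p ≤ p')
    (hw : window prec Λ t p' = D ∩ Kc k p') :
    window prec Λ t p = D ∩ Kc k p := by
  rw [window_eq_iff h hD] at hw ⊢
  intro s hs hsc
  exact hw s hs (Kc_mono hpp hsc)

lemma lamP_anti (C : CondD k) {j : ℕ} (hj : (j : ℕ∞) < C.q) {p p' : ℕ} (hpp : p ≤ p') :
    C.lamP j p' ≤ C.lamP j p := by
  refine le_of_tendsto_of_tendsto' (C.tendsto_lamP j p' hj) (C.tendsto_lamP j p hj)
    (fun n => ?_)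
  apply div_le_div_of_nonneg_right ?_ (Nat.cast_nonneg _)
  · have : ((C.Lam n).filter fun t =>
          window C.prec (C.Lam n : Set (V k)) t p' = C.D j ∩ Kc k p').card ≤
          ((C.Lam n).filter fun t =>
          window C.prec (C.Lam n : Set (V k)) t p = C.D j ∩ Kc k p).card := by
        apply Finset.card_le_card
        intro t ht
        rw [Finset.mem_filter] at ht ⊢
        exact ⟨ht.1, window_eq_mono C.ord (fun a ha => C.D_subset j hj ha) hpp ht.2⟩
    exact_mod_cast this

lemma lam_le_lamP (C : CondD k) {j : ℕ} (hj : (j : ℕ∞) < C.q) (p : ℕ) :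
    C.lam j ≤ C.lamP j p := by
  refine le_of_tendsto (C.tendsto_lam j hj) ?_
  filter_upwards [eventually_ge_atTop p] with p' hp'
  exact lamP_anti C hj hp'

/-- The master counting lemma: among any `M` points of `D j` with `M·λ_j > 1`,
some difference lies in `𝓖_j`. -/
lemma master (C : CondD k) {j : ℕ} (hj : (j : ℕ∞) < C.q) {M : ℕ}
    (hM : 1 < (M : ℝ) * C.lam j) (w : Fin M → V k) (hw : ∀ m, w m ∈ C.D j) :
    ∃ m m' : Fin M, m ≠ m' ∧ w m - w m' ∈ Gset C.prec (C.D j) := by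
  by_contra hcon
  push_neg at hcon
  have hord := C.ord
  have hD : ∀ a ∈ C.D j, C.prec 0 a := fun a ha => C.D_subset j hj ha
  obtain ⟨c, hc⟩ := exists_Kc_bound w
  have key : ∀ m m' : Fin M, m ≠ m' → w m - w m' ∈ C.D j →
      ∃ u : V k, C.prec 0 u ∧ ¬((u + (w m - w m') ∈ C.D j) ↔ u ∈ C.D j) := by
    intro m m' hmm hd
    have hng := hcon m m' hmm
    have hsh : shiftPos C.prec (C.D j) (w m - w m') ≠ C.D j := by
      intro he
      exact hng (mem_Gset.mpr ⟨Or.inr hd, he⟩)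
    have hne : ¬ ∀ u, u ∈ shiftPos C.prec (C.D j) (w m - w m') ↔ u ∈ C.D j :=
      fun hh => hsh (Set.ext hh)
    push_neg at hne
    obtain ⟨u, hu⟩ := hne
    rw [mem_shiftPos] at hu
    rcases hu with ⟨⟨h1, h2⟩, h3⟩ | ⟨h1, h2⟩
    · exact ⟨u, h2, fun hiff => h3 (hiff.mp h1)⟩
    · exact ⟨u, hD u h2, fun hiff => h1 ⟨hiff.mpr h2, hD u h2⟩⟩
  let U : Fin M × Fin M → V k := fun q =>
    if hq : q.1 ≠ q.2 ∧ w q.1 - w q.2 ∈ C.D j then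
      Classical.choose (key q.1 q.2 hq.1 hq.2) else 0
  obtain ⟨pw, hpw⟩ := exists_Kc_bound U
  set P := pw + (c + c) with hP
  have hM0 : 0 < M := by
    by_contra hM0
    push_neg at hM0
    have : M = 0 := by omega
    rw [this] at hM
    norm_num at hM
  have hcount : ∀ n : ℕ, M * (((C.Lam n).filter fun t =>
      window C.prec (C.Lam n : Set (V k)) t P = C.D j ∩ Kc k P).card) ≤ (C.Lam n).card := by
    intro n
    set T := (C.Lam n).filter fun t =>
      window C.prec ((C.Lam n : Set (V k))) t P = C.D j ∩ Kc k P with hT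
    have hTsub : ∀ t ∈ T, window C.prec (C.Lam n : Set (V k)) t P = C.D j ∩ Kc k P :=
      fun t ht => (Finset.mem_filter.mp ht).2
    have hTmem : ∀ t ∈ T, t ∈ C.Lam n := fun t ht => (Finset.mem_filter.mp ht).1
    have subclaim : ∀ t ∈ T, ∀ t' ∈ T, ∀ m m' : Fin M, m ≠ m' →
        C.prec 0 (w m - w m') → t + w m = t' + w m' → False := by
      intro t ht t' ht' m m' hmm hpos heq
      have htt' : t' = (w m - w m') + t := by
        have e : t' = t + w m - w m' := by
          rw [eq_sub_iff_add_eq]; exact heq.symm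
        rw [e]; abel
      have hdmem : (w m - w m') + t ∈ (C.Lam n : Set (V k)) := by
        rw [← htt']
        exact_mod_cast hTmem t' ht'
      have hdK2 : w m - w m' ∈ Kc k (c + c) := mem_Kc_sub (hc m) (hc m')
      have hdK : w m - w m' ∈ Kc k P := Kc_mono (by omega) hdK2
      have hdD : w m - w m' ∈ C.D j :=
        ((window_eq_iff hord hD).mp (hTsub t ht) _ hpos hdK).mp hdmem
      have hspec := Classical.choose_spec (key m m' hmm hdD)
      set u := Classical.choose (key m m' hmm hdD) with hu
      obtain ⟨hupos, huiff⟩ := hspec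
      have hUeq : U (m, m') = u := dif_pos ⟨hmm, hdD⟩
      have huK : u ∈ Kc k pw := by rw [← hUeq]; exact hpw (m, m')
      apply huiff
      have c1 : (u + (w m - w m')) + t ∈ (C.Lam n : Set (V k)) ↔
          u + (w m - w m') ∈ C.D j :=
        (window_eq_iff hord hD).mp (hTsub t ht) _ (pos_add hord hupos hpos)
          (mem_Kc_add huK hdK2)
      have c2 : u + t' ∈ (C.Lam n : Set (V k)) ↔ u ∈ C.D j :=
        (window_eq_iff hord hD).mp (hTsub t' ht') _ hupos (Kc_mono (by omega) huK)
      have e : (u + (w m - w m')) + t = u + t' := by rw [htt']; abel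
      rw [← c1, e, c2]
    have hinjmap : (T ×ˢ (Finset.univ : Finset (Fin M))).card ≤ (C.Lam n).card := by
      apply Finset.card_le_card_of_injOn (fun q => q.1 + w q.2)
      · intro q hq
        obtain ⟨hq1, -⟩ := Finset.mem_product.mp hq
        have hwin := ((window_eq_iff hord hD).mp (hTsub q.1 hq1) (w q.2)
          (hD _ (hw q.2)) (Kc_mono (by omega) (hc q.2))).mpr (hw q.2)
        have : q.1 + w q.2 ∈ (C.Lam n : Set (V k)) := by rwa [add_comm] at hwin
        exact_mod_cast this
      · intro q hq q' hq' heq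
        simp only [Finset.coe_product, Set.mem_prod, Finset.mem_coe] at hq hq'
        by_cases hmm : q.2 = q'.2
        · have heq' : q.1 + w q.2 = q'.1 + w q'.2 := heq
          rw [hmm] at heq'
          have h1 : q.1 = q'.1 := add_right_cancel heq'
          exact Prod.ext h1 hmm
        · exfalso
          rcases trich hord (w q.2 - w q'.2) with h0 | h0 | h0
          · have : w q.2 = w q'.2 := by
              have := sub_eq_zero.mp h0
              exact this
            have h00 : w q.2 - w q'.2 ∈ Gset C.prec (C.D j) := by
              rw [h0]; exact zero_mem_Gset hD
            exact hcon q.2 q'.2 hmm h00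
          · exact subclaim q.1 hq.1 q'.1 hq'.1 q.2 q'.2 hmm h0 heq
          · have h0' : C.prec 0 (w q'.2 - w q.2) := by
              have : C.prec 0 (0 - (w q.2 - w q'.2)) := (sub_pos_iff hord).mpr h0
              have e : (0:V k) - (w q.2 - w q'.2) = w q'.2 - w q.2 := by abel
              rwa [e] at this
            exact subclaim q'.1 hq'.1 q.1 hq.1 q'.2 q.2 (Ne.symm hmm) h0' heq.symm
    calc M * T.card = T.card * M := Nat.mul_comm _ _
    _ = (T ×ˢ (Finset.univ : Finset (Fin M))).card := by
        rw [Finset.card_product, Finset.card_univ, Fintype.card_fin]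
    _ ≤ (C.Lam n).card := hinjmap
  have hev : ∀ᶠ n in atTop, (((C.Lam n).filter fun t =>
      window C.prec (C.Lam n : Set (V k)) t P = C.D j ∩ Kc k P).card : ℝ) /
        ((C.Lam n).card : ℝ) ≤ 1 / M := by
    filter_upwards [C.card_top.eventually_ge_atTop 1] with n hn
    have hposc : (0:ℝ) < ((C.Lam n).card : ℝ) := by exact_mod_cast hn
    rw [div_le_div_iff₀ hposc (by exact_mod_cast hM0 : (0:ℝ) < (M:ℝ))]
    have := hcount n
    have hcast : (M:ℝ) * (((C.Lam n).filter fun t =>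
        window C.prec (C.Lam n : Set (V k)) t P = C.D j ∩ Kc k P).card : ℝ) ≤
        ((C.Lam n).card : ℝ) := by exact_mod_cast this
    nlinarith [hcast]
  have h1 : C.lamP j P ≤ 1 / M := le_of_tendsto (C.tendsto_lamP j P hj) hev
  have h2 : C.lam j ≤ 1 / M := (lam_le_lamP C hj P).trans h1
  have hMR : (0:ℝ) < (M:ℝ) := by exact_mod_cast hM0
  have : (M:ℝ) * C.lam j ≤ (M:ℝ) * (1 / M) := by
    exact mul_le_mul_of_nonneg_left h2 (le_of_lt hMR)
  rw [mul_one_div, div_self (ne_of_gt hMR)] at this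
  linarith

end Counting

section Apps

variable {prec : V k → V k → Prop}

lemma Gset_mono (h : IsTransOrder prec) {A : Set (V k)} (hA : ∀ a ∈ A, prec 0 a)
    {z : V k} (hz : z ∈ A) :
    Gset prec A ⊆ Gset prec (shiftPos prec A z) := by
  intro x hx
  have hxs := (mem_Gset.mp hx).2
  have hxn := Gset_nonneg hA hx
  have hzpos : prec 0 z := hA z hz
  have hsh : shiftPos prec (shiftPos prec A z) x = shiftPos prec A z := by
    rw [shiftPos_shiftPos h hxn]
    rw [add_comm z x, ← shiftPos_shiftPos h (Or.inr hzpos), hxs]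
  refine mem_Gset.mpr ⟨?_, hsh⟩
  rcases hxn with rfl | hxpos
  · exact Or.inl rfl
  · refine Or.inr (mem_shiftPos.mpr ⟨?_, hxpos⟩)
    rw [add_comm]
    exact Gset_translate hx hz

lemma cover (h : IsTransOrder prec) {A : Set (V k)} (hA : ∀ a ∈ A, prec 0 a)
    {d z : V k} (hd : d ∈ A) (hz : z ∈ A)
    (heq : shiftPos prec A d = shiftPos prec A z) :
    d - z ∈ Lset prec (shiftPos prec A z) := by
  rcases trich h (d - z) with h0 | h0 | h0
  · rw [h0]
    exact mem_Lset.mpr (Or.inl (zero_mem_Gset (fun a ha => shiftPos_pos ha)))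
  · refine mem_Lset.mpr (Or.inl (mem_Gset.mpr ⟨Or.inr ?_, ?_⟩))
    · exact mem_shiftPos.mpr ⟨by simpa using hd, h0⟩
    · rw [shiftPos_shiftPos h (Or.inr h0)]
      have e : z + (d - z) = d := by abel
      rw [e, heq]
  · have h0' : prec 0 (z - d) := by
      have h1 : prec 0 (0 - (d - z)) := (sub_pos_iff h).mpr h0
      have e : (0:V k) - (d - z) = z - d := by abel
      rwa [e] at h1
    refine mem_Lset.mpr (Or.inr ?_)
    have e : -(d - z) = z - d := by abel
    rw [e, ← heq]
    refine mem_Gset.mpr ⟨Or.inr ?_, ?_⟩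
    · exact mem_shiftPos.mpr ⟨by simpa using hz, h0'⟩
    · rw [shiftPos_shiftPos h (Or.inr h0')]
      have e2 : d + (z - d) = z := by abel
      rw [e2, heq]

lemma add_nsmul_mem (h : IsTransOrder prec) {A : Set (V k)} {z g : V k}
    (hz : z ∈ A) (hg : g ∈ Gset prec (shiftPos prec A z)) (n : ℕ) :
    z + n • g ∈ A := by
  have hE : ∀ a ∈ shiftPos prec A z, prec 0 a := fun a ha => shiftPos_pos ha
  have hn : n • g ∈ Gset prec (shiftPos prec A z) := Gset_nsmul h hE hg n
  rcases (mem_Gset.mp hn).1 with h0 | h0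
  · rw [h0]; simpa using hz
  · have h1 := (mem_shiftPos.mp h0).1
    rwa [add_comm] at h1

lemma exists_M (C : CondD k) {j : ℕ} (hj : (j : ℕ∞) < C.q) :
    ∃ M : ℕ, 1 < (M : ℝ) * C.lam j := by
  obtain ⟨M, hM⟩ := exists_nat_gt (2 / C.lam j)
  have hl := C.lam_pos j hj
  refine ⟨M, ?_⟩
  rw [div_lt_iff₀ hl] at hM
  linarith

lemma exists_nsmul_Gset (C : CondD k) {j : ℕ} (hj : (j : ℕ∞) < C.q) {x g : V k}
    (hx : ∀ n : ℕ, x + n • g ∈ C.D j) (hg : C.prec 0 g) :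
    ∃ m : ℕ, 1 ≤ m ∧ m • g ∈ Gset C.prec (C.D j) := by
  obtain ⟨M, hM⟩ := exists_M C hj
  obtain ⟨m, m', hne, hmem⟩ := master C hj hM (fun m : Fin M => x + (m : ℕ) • g)
    (fun m => hx m)
  have hord := C.ord
  have hD : ∀ a ∈ C.D j, C.prec 0 a := fun a ha => C.D_subset j hj ha
  have hdiff : (x + (m:ℕ) • g) - (x + (m':ℕ) • g) = (((m:ℕ):ℤ) - ((m':ℕ):ℤ)) • g := by
    rw [sub_smul, natCast_zsmul, natCast_zsmul]; abel
  rw [hdiff] at hmem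
  have hvne : (m:ℕ) ≠ (m':ℕ) := fun hh => hne (Fin.ext hh)
  rcases Nat.lt_or_ge (m:ℕ) (m':ℕ) with hlt | hge
  · exfalso
    have hcast : (((m:ℕ):ℤ) - ((m':ℕ):ℤ)) • g = -(((m':ℕ) - (m:ℕ)) • g) := by
      rw [← natCast_zsmul g ((m':ℕ) - (m:ℕ)), ← neg_smul]
      congr 1
      push_cast [Nat.cast_sub (le_of_lt hlt)]
      ring
    rw [hcast] at hmem
    have hpos : C.prec 0 (((m':ℕ) - (m:ℕ)) • g) := pos_nsmul hord hg _ (by omega)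
    rcases Gset_nonneg hD hmem with h0 | h0
    · rw [neg_eq_zero] at h0
      rw [h0] at hpos
      exact hord.irrefl 0 hpos
    · have h1 : C.prec (((m':ℕ) - (m:ℕ)) • g) 0 := by
        simpa using hord.invariant 0 _ (((m':ℕ) - (m:ℕ)) • g) h0
      exact hord.irrefl 0 (hord.trans hpos h1)
  · have hgt : (m':ℕ) < (m:ℕ) := by omega
    refine ⟨(m:ℕ) - (m':ℕ), by omega, ?_⟩
    have hcast : (((m:ℕ):ℤ) - ((m':ℕ):ℤ)) • g = ((m:ℕ) - (m':ℕ)) • g := by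
      rw [← natCast_zsmul g ((m:ℕ) - (m':ℕ))]
      congr 1
      push_cast [Nat.cast_sub (le_of_lt hgt)]
      ring
    rwa [hcast] at hmem

lemma an1 (C : CondD k) {j : ℕ} (hj : (j : ℕ∞) < C.q) {z g : V k} (hz : z ∈ C.D j)
    (hg : g ∈ Gset C.prec (shiftPos C.prec (C.D j) z))
    (hpos : C.prec 0 (z - g)) : z - g ∈ C.D j := by
  have hord := C.ord
  have hE : ∀ a ∈ shiftPos C.prec (C.D j) z, C.prec 0 a := fun a ha => shiftPos_pos ha
  rcases Gset_nonneg hE hg with rfl | hgpos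
  · simpa using hz
  · have hxn : ∀ n : ℕ, z + n • g ∈ C.D j := add_nsmul_mem hord hz hg
    obtain ⟨m, hm1, hmG⟩ := exists_nsmul_Gset C hj hxn hgpos
    have hd : z + (m - 1) • g ∈ C.D j := hxn (m - 1)
    have he : (z + (m - 1) • g) - m • g = z - g := by
      have h1 : m • g = (m - 1) • g + g := by
        rw [← succ_nsmul]
        congr 1
        omega
      rw [h1]; abel
    have h2 := Gset_translate_down hmG hd (by rwa [he])
    rwa [he] at h2

lemma star2 (C : CondD k) {j : ℕ} (hj : (j : ℕ∞) < C.q) {x z g : V k}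
    (hx : x ∈ C.D j) (hz : z ∈ C.D j)
    (hg : g ∈ Gset C.prec (shiftPos C.prec (C.D j) z)) (heq : x + g = z) :
    shiftPos C.prec (C.D j) x = shiftPos C.prec (C.D j) z := by
  have hord := C.ord
  have hD : ∀ a ∈ C.D j, C.prec 0 a := fun a ha => C.D_subset j hj ha
  have hE : ∀ a ∈ shiftPos C.prec (C.D j) z, C.prec 0 a := fun a ha => shiftPos_pos ha
  rcases Gset_nonneg hE hg with rfl | hgpos
  · rw [← heq, add_zero]
  · have hxn : ∀ n : ℕ, x + n • g ∈ C.D j := by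
      intro n
      cases n with
      | zero => simpa using hx
      | succ p =>
        have e : x + (p+1) • g = z + p • g := by
          rw [succ_nsmul']
          rw [← heq]; abel
        rw [e]
        exact add_nsmul_mem hord hz hg p
    obtain ⟨m, hm1, hmG⟩ := exists_nsmul_Gset C hj hxn hgpos
    have e1 : shiftPos C.prec (C.D j) (m • g + x) = shiftPos C.prec (C.D j) x := by
      rw [← shiftPos_shiftPos hord (Or.inr (hD x hx)), (mem_Gset.mp hmG).2]
    have e2 : m • g + x = z + (m-1) • g := by
      have h1 : m • g = g + (m - 1) • g := by
        rw [← succ_nsmul']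
        congr 1
        omega
      rw [h1, ← heq]; abel
    have hmG' : (m-1) • g ∈ Gset C.prec (shiftPos C.prec (C.D j) z) :=
      Gset_nsmul hord hE hg (m-1)
    have e3 : shiftPos C.prec (C.D j) (z + (m-1) • g) = shiftPos C.prec (C.D j) z := by
      rw [← shiftPos_shiftPos hord (Gset_nonneg hE hmG'), (mem_Gset.mp hmG').2]
    rw [← e1, e2, e3]

lemma star (C : CondD k) {j : ℕ} (hj : (j : ℕ∞) < C.q) {x z : V k}
    (hx : x ∈ C.D j) (hz : z ∈ C.D j)
    (hw : x - z ∈ Lset C.prec (shiftPos C.prec (C.D j) z)) :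
    shiftPos C.prec (C.D j) x = shiftPos C.prec (C.D j) z := by
  have hord := C.ord
  have hE : ∀ a ∈ shiftPos C.prec (C.D j) z, C.prec 0 a := fun a ha => shiftPos_pos ha
  rcases mem_Lset.mp hw with h1 | h1
  · have hn := Gset_nonneg hE h1
    have e : shiftPos C.prec (C.D j) (z + (x - z)) = shiftPos C.prec (C.D j) z := by
      rw [← shiftPos_shiftPos hord hn, (mem_Gset.mp h1).2]
    have e2 : z + (x - z) = x := by abel
    rwa [e2] at e
  · have e : -(x - z) = z - x := by abel
    rw [e] at h1
    exact star2 C hj hx hz h1 (by abel)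

lemma mult_lemma (C : CondD k) {j : ℕ} (hj : (j : ℕ∞) < C.q) {z g : V k}
    (hz : z ∈ C.D j) (hg : g ∈ Gset C.prec (shiftPos C.prec (C.D j) z)) :
    ∃ m : ℕ, 1 ≤ m ∧ m • g ∈ Gset C.prec (C.D j) := by
  have hord := C.ord
  have hD : ∀ a ∈ C.D j, C.prec 0 a := fun a ha => C.D_subset j hj ha
  have hE : ∀ a ∈ shiftPos C.prec (C.D j) z, C.prec 0 a := fun a ha => shiftPos_pos ha
  rcases Gset_nonneg hE hg with rfl | hgpos
  · exact ⟨1, le_refl 1, by simpa using zero_mem_Gset hD⟩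
  · exact exists_nsmul_Gset C hj (add_nsmul_mem hord hz hg) hgpos

end Apps

section Rank

lemma toIntSubmodule_closure (S : Set (V k)) :
    AddSubgroup.toIntSubmodule (AddSubgroup.closure S) = Submodule.span ℤ S := by
  rw [← Submodule.span_int_eq_addSubgroupClosure]
  have h := congrFun AddSubgroup.toIntSubmodule_symm (Submodule.span ℤ S)
  rw [← h]
  exact AddSubgroup.toIntSubmodule.apply_symm_apply _

lemma latticeRank_eq (S : Set (V k)) :
    latticeRank S = Module.finrank ℤ ↥(Submodule.span ℤ S) := by
  unfold latticeRank
  rw [toIntSubmodule_closure]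

lemma rank_le_of_mul (S T : Set (V k))
    (hmul : ∀ v ∈ T, ∃ m : ℕ, 1 ≤ m ∧ (m : ℤ) • v ∈ Submodule.span ℤ S) :
    Module.finrank ℤ ↥(Submodule.span ℤ T) ≤ Module.finrank ℤ ↥(Submodule.span ℤ S) := by
  classical
  have hall : ∀ v ∈ Submodule.span ℤ T, ∃ m : ℤ, 0 < m ∧ m • v ∈ Submodule.span ℤ S := by
    intro v hv
    refine Submodule.span_induction
      (p := fun x _ => ∃ m : ℤ, 0 < m ∧ m • x ∈ Submodule.span ℤ S) ?_ ?_ ?_ ?_ hv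
    · intro x hx
      obtain ⟨m, hm1, hm2⟩ := hmul x hx
      exact ⟨m, by exact_mod_cast hm1, hm2⟩
    · exact ⟨1, one_pos, by simp⟩
    · rintro x y hx hy ⟨mx, hmx, hmx2⟩ ⟨my, hmy, hmy2⟩
      refine ⟨mx * my, mul_pos hmx hmy, ?_⟩
      have e : (mx * my) • (x + y) = my • (mx • x) + mx • (my • y) := by
        rw [smul_add, smul_smul, smul_smul, mul_comm my mx]
      rw [e]
      exact Submodule.add_mem _ (Submodule.smul_mem _ _ hmx2) (Submodule.smul_mem _ _ hmy2)
    · rintro a x hx ⟨m, hm, hm2⟩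
      refine ⟨m, hm, ?_⟩
      rw [smul_comm]
      exact Submodule.smul_mem _ _ hm2
  have hfg : (Submodule.span ℤ T).FG := IsNoetherian.noetherian _
  obtain ⟨F, hF⟩ := hfg
  have hFmem : ∀ x ∈ F, (x : V k) ∈ Submodule.span ℤ T := by
    intro x hx; rw [← hF]; exact Submodule.subset_span hx
  choose mf hmf1 hmf2 using fun x (hx : x ∈ F) => hall x (hFmem x hx)
  set m : ℤ := ∏ x ∈ F.attach, mf x.1 x.2 with hm
  have hmpos : 0 < m := Finset.prod_pos (fun x _ => hmf1 x.1 x.2)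
  have hsm : ∀ v ∈ Submodule.span ℤ T, m • v ∈ Submodule.span ℤ S := by
    intro v hv
    rw [← hF] at hv
    refine Submodule.span_induction
      (p := fun x _ => m • x ∈ Submodule.span ℤ S) ?_ ?_ ?_ ?_ hv
    · intro x hx
      have hdvd : mf x hx ∣ m := Finset.dvd_prod_of_mem _ (Finset.mem_attach F ⟨x, hx⟩)
      obtain ⟨c, hc⟩ := hdvd
      rw [hc, mul_comm, mul_smul]
      exact Submodule.smul_mem _ _ (hmf2 x hx)
    · simp
    · intro x y hx hy h1 h2
      rw [smul_add]; exact Submodule.add_mem _ h1 h2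
    · intro a x hx h1
      rw [smul_comm]; exact Submodule.smul_mem _ _ h1
  haveI : Module.Finite ℤ ↥(Submodule.span ℤ S) :=
    Module.Finite.iff_fg.mpr (IsNoetherian.noetherian _)
  let f : ↥(Submodule.span ℤ T) →ₗ[ℤ] ↥(Submodule.span ℤ S) :=
    LinearMap.codRestrict _ ((LinearMap.lsmul ℤ (V k) m).comp (Submodule.span ℤ T).subtype)
      (fun v => hsm v v.2)
  have hfinj : Function.Injective f := by
    intro a b hab
    have h1 : m • (a : V k) = m • (b : V k) := by
      have h2 := congrArg Subtype.val hab
      exact h2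
    exact Subtype.ext (smul_right_injective (V k) (ne_of_gt hmpos) h1)
  exact LinearMap.finrank_le_finrank_of_injective hfinj

end Rank

lemma mem_posPart {prec : V k → V k → Prop} {A : Set (V k)} {x : V k} :
    x ∈ posPart prec A ↔ x ∈ A ∧ prec 0 x := Iff.rfl

lemma finset_Kc_bound (s : Finset (V k)) : ∃ c : ℕ, ∀ v ∈ s, v ∈ Kc k c := by
  obtain ⟨c, hc⟩ := exists_Kc_bound (fun x : {a // a ∈ s} => (x : V k))
  exact ⟨c, fun v hv => hc ⟨v, hv⟩⟩


/-- lattice structure and partition of `D_j`: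
`𝓛_j` is a subgroup of `ℤ^k`; `D_j` is partitioned as
`𝓛_j⁺ ∪ ⋃_i ((𝓛_{l_i})_{z_{l_i}})⁺` (pairwise disjoint); `𝓛_{l_i} ⊇ 𝓛_j` with equal rank;
and `D_j` is bounded iff `𝓛_j = {0}`, in which case `D_j = {z_{l_1},…,z_{l_{b_j}}}`. -/
theorem stmt2 (k : ℕ) (hk : 1 ≤ k) (C : CondD k) (j : ℕ) (hj : (j : ℕ∞) < C.q)
    (b : ℕ) (Dl : Fin b → Set (V k)) (zl : Fin b → V k)
    (hzl : ∀ i, zl i ∈ C.D j \ Gset C.prec (C.D j))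
    (hDl : ∀ i, Dl i = shiftPos C.prec (C.D j) (zl i))
    (hinj : Function.Injective Dl)
    (hsurj : ∀ z ∈ C.D j \ Gset C.prec (C.D j), ∃ i, shiftPos C.prec (C.D j) z = Dl i) :
    (∃ H : AddSubgroup (V k), (H : Set (V k)) = Lset C.prec (C.D j)) ∧
    (C.D j = posPart C.prec (Lset C.prec (C.D j)) ∪
        ⋃ i, posPart C.prec (tr (Lset C.prec (Dl i)) (zl i))) ∧
    (∀ i, Disjoint (posPart C.prec (Lset C.prec (C.D j)))
        (posPart C.prec (tr (Lset C.prec (Dl i)) (zl i)))) ∧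
    (Pairwise fun i i' => Disjoint (posPart C.prec (tr (Lset C.prec (Dl i)) (zl i)))
        (posPart C.prec (tr (Lset C.prec (Dl i')) (zl i')))) ∧
    (∀ i, Lset C.prec (C.D j) ⊆ Lset C.prec (Dl i)) ∧
    (∀ i, latticeRank (Lset C.prec (Dl i)) = latticeRank (Lset C.prec (C.D j))) ∧
    ((∃ c : ℕ, C.D j ⊆ Kc k c) ↔ Lset C.prec (C.D j) = {0}) ∧
    ((∃ c : ℕ, C.D j ⊆ Kc k c) → C.D j = Set.range zl) := by
  classical
  have hord := C.ord
  have hD : ∀ a ∈ C.D j, C.prec 0 a := fun a ha => C.D_subset j hj ha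
  have hE : ∀ i, ∀ a ∈ Dl i, C.prec 0 a := by
    intro i a ha; rw [hDl i] at ha; exact shiftPos_pos ha
  have posL : ∀ y, y ∈ posPart C.prec (Lset C.prec (C.D j)) →
      y ∈ Gset C.prec (C.D j) ∧ y ∈ C.D j := by
    intro y hy
    obtain ⟨hy1, hy2⟩ := mem_posPart.mp hy
    have hyG : y ∈ Gset C.prec (C.D j) := by
      rcases mem_Lset.mp hy1 with h1 | h1
      · exact h1
      · exfalso
        rcases Gset_nonneg hD h1 with h0 | h0
        · rw [neg_eq_zero] at h0; rw [h0] at hy2; exact hord.irrefl 0 hy2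
        · have h2 : C.prec y 0 := by simpa using hord.invariant 0 (-y) y h0
          exact hord.irrefl 0 (hord.trans hy2 h2)
    refine ⟨hyG, ?_⟩
    rcases (mem_Gset.mp hyG).1 with h0 | h0
    · exfalso; rw [h0] at hy2; exact hord.irrefl 0 hy2
    · exact h0
  have cosetD : ∀ i, ∀ y, y ∈ posPart C.prec (tr (Lset C.prec (Dl i)) (zl i)) →
      y ∈ C.D j := by
    intro i y hy
    obtain ⟨hy1, hy2⟩ := mem_posPart.mp hy
    have hy1' : y - zl i ∈ Lset C.prec (shiftPos C.prec (C.D j) (zl i)) := by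
      have h3 := mem_tr.mp hy1
      rwa [hDl i] at h3
    rcases mem_Lset.mp hy1' with h1 | h1
    · rcases (mem_Gset.mp h1).1 with h0 | h0
      · have h4 : y = zl i := sub_eq_zero.mp h0
        rw [h4]; exact (hzl i).1
      · have h4 := (mem_shiftPos.mp h0).1
        simpa using h4
    · have e : -(y - zl i) = zl i - y := by abel
      rw [e] at h1
      have e2 : zl i - (zl i - y) = y := by abel
      have h5 := an1 C hj (hzl i).1 h1 (by rw [e2]; exact hy2)
      rwa [e2] at h5
  have cosetStar : ∀ i, ∀ y, y ∈ posPart C.prec (tr (Lset C.prec (Dl i)) (zl i)) →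
      shiftPos C.prec (C.D j) y = shiftPos C.prec (C.D j) (zl i) := by
    intro i y hy
    have hyD := cosetD i y hy
    obtain ⟨hy1, hy2⟩ := mem_posPart.mp hy
    have hy1' : y - zl i ∈ Lset C.prec (shiftPos C.prec (C.D j) (zl i)) := by
      have h3 := mem_tr.mp hy1; rwa [hDl i] at h3
    exact star C hj hyD (hzl i).1 hy1'
  have partition : C.D j = posPart C.prec (Lset C.prec (C.D j)) ∪
      ⋃ i, posPart C.prec (tr (Lset C.prec (Dl i)) (zl i)) := by
    apply Set.Subset.antisymm
    · intro d hd
      by_cases hG : d ∈ Gset C.prec (C.D j)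
      · exact Set.mem_union_left _ (mem_posPart.mpr ⟨mem_Lset.mpr (Or.inl hG), hD d hd⟩)
      · obtain ⟨i, hi⟩ := hsurj d ⟨hd, hG⟩
        rw [hDl i] at hi
        have hc := cover hord hD hd (hzl i).1 hi
        refine Set.mem_union_right _ (Set.mem_iUnion.mpr ⟨i,
          mem_posPart.mpr ⟨mem_tr.mpr ?_, hD d hd⟩⟩)
        rw [hDl i]; exact hc
    · intro y hy
      rcases (Set.mem_union _ _ _).mp hy with h1 | h1
      · exact (posL y h1).2
      · obtain ⟨i, hi⟩ := Set.mem_iUnion.mp h1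
        exact cosetD i y hi
  have disj1 : ∀ i, Disjoint (posPart C.prec (Lset C.prec (C.D j)))
      (posPart C.prec (tr (Lset C.prec (Dl i)) (zl i))) := by
    intro i
    rw [Set.disjoint_left]
    intro y hyL hyC
    obtain ⟨hyG, _⟩ := posL y hyL
    have h1 := cosetStar i y hyC
    have h2 : shiftPos C.prec (C.D j) (zl i) = C.D j := by
      rw [← h1, (mem_Gset.mp hyG).2]
    exact (hzl i).2 (mem_Gset.mpr ⟨Or.inr (hzl i).1, h2⟩)
  have disj2 : Pairwise fun i i' =>
      Disjoint (posPart C.prec (tr (Lset C.prec (Dl i)) (zl i)))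
        (posPart C.prec (tr (Lset C.prec (Dl i')) (zl i'))) := by
    intro i i' hii
    rw [Set.disjoint_left]
    intro y hyC hyC'
    apply hii
    apply hinj
    rw [hDl i, hDl i', ← cosetStar i y hyC, ← cosetStar i' y hyC']
  have mono : ∀ i, Lset C.prec (C.D j) ⊆ Lset C.prec (Dl i) := by
    intro i x hx
    rw [hDl i]
    rcases mem_Lset.mp hx with h1 | h1
    · exact mem_Lset.mpr (Or.inl (Gset_mono hord hD (hzl i).1 h1))
    · exact mem_Lset.mpr (Or.inr (Gset_mono hord hD (hzl i).1 h1))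
  have rank : ∀ i, latticeRank (Lset C.prec (Dl i)) = latticeRank (Lset C.prec (C.D j)) := by
    intro i
    rw [latticeRank_eq, latticeRank_eq]
    apply le_antisymm
    · apply rank_le_of_mul
      intro v hv
      rw [hDl i] at hv
      rcases mem_Lset.mp hv with h1 | h1
      · obtain ⟨m, hm1, hm2⟩ := mult_lemma C hj (hzl i).1 h1
        refine ⟨m, hm1, ?_⟩
        rw [natCast_zsmul]
        exact Submodule.subset_span (mem_Lset.mpr (Or.inl hm2))
      · obtain ⟨m, hm1, hm2⟩ := mult_lemma C hj (hzl i).1 h1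
        refine ⟨m, hm1, ?_⟩
        have e : (m:ℤ) • v = -((m:ℤ) • (-v)) := by rw [smul_neg, neg_neg]
        rw [e]
        apply Submodule.neg_mem
        rw [natCast_zsmul]
        exact Submodule.subset_span (mem_Lset.mpr (Or.inl hm2))
    · apply rank_le_of_mul
      intro v hv
      exact ⟨1, le_refl 1, by simpa using Submodule.subset_span (mono i hv)⟩
  have hbdd_L : (∃ c : ℕ, C.D j ⊆ Kc k c) → Lset C.prec (C.D j) = {0} := by
    rintro ⟨c, hc⟩
    have hG0 : ∀ g ∈ Gset C.prec (C.D j), g = 0 := by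
      intro g hg
      by_contra hgne
      have hgD : g ∈ C.D j := by
        rcases (mem_Gset.mp hg).1 with h0 | h0
        · exact absurd h0 hgne
        · exact h0
      have hmem : ∀ n : ℕ, 1 ≤ n → n • g ∈ C.D j := by
        intro n hn
        induction n with
        | zero => omega
        | succ p ih =>
          rcases Nat.eq_or_lt_of_le hn with h1 | h1
          · rw [← h1]; simpa using hgD
          · have hp := ih (by omega)
            rw [succ_nsmul]
            exact Gset_translate hg hp
      obtain ⟨i0, hi0⟩ := Function.ne_iff.mp hgne
      have hi0' : (1:ℤ) ≤ |g i0| := Int.one_le_abs (by simpa using hi0)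
      have hb := hc (hmem (c+1) (by omega)) i0
      have e : ((c+1) • g) i0 = ((c:ℤ)+1) * g i0 := by
        have : ((c+1) • g) i0 = ((c+1 : ℕ) : ℤ) * g i0 := by
          simp only [Pi.smul_apply, nsmul_eq_mul]
        rw [this]; push_cast; ring
      rw [e, abs_mul] at hb
      have habs : |((c:ℤ)+1)| = (c:ℤ)+1 := abs_of_nonneg (by positivity)
      rw [habs] at hb
      nlinarith
    ext x
    simp only [Set.mem_singleton_iff]
    constructor
    · intro hx
      rcases mem_Lset.mp hx with h1 | h1
      · exact hG0 x h1
      · have h2 := hG0 _ h1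
        simpa [neg_eq_zero] using h2
    · intro hx
      rw [hx]
      exact mem_Lset.mpr (Or.inl (zero_mem_Gset hD))
  have hL_bdd : Lset C.prec (C.D j) = {0} → (∃ c : ℕ, C.D j ⊆ Kc k c) := by
    intro hL
    have hfin : (C.D j).Finite := by
      by_contra hinf
      have hinf' : (C.D j).Infinite := hinf
      obtain ⟨M, hM⟩ := exists_M C hj
      obtain ⟨t, hts, htc⟩ := Set.Infinite.exists_subset_card_eq hinf' M
      set w : Fin M → V k := fun i => (t.equivFin.symm (Fin.cast htc.symm i) : V k) with hw
      have hwD : ∀ i, w i ∈ C.D j := fun i => hts (t.equivFin.symm (Fin.cast htc.symm i)).2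
      obtain ⟨m, m', hne, hmem⟩ := master C hj hM w hwD
      have h0 : w m - w m' = 0 := by
        have h1 : w m - w m' ∈ Lset C.prec (C.D j) := mem_Lset.mpr (Or.inl hmem)
        rw [hL] at h1
        simpa using h1
      have h1 : w m = w m' := sub_eq_zero.mp h0
      have h2 : t.equivFin.symm (Fin.cast htc.symm m) = t.equivFin.symm (Fin.cast htc.symm m') :=
        Subtype.ext h1
      have h3 := t.equivFin.symm.injective h2
      have h4 := congrArg Fin.val h3
      simp only [Fin.coe_cast] at h4
      exact hne (Fin.ext h4)
    obtain ⟨c, hcb⟩ := finset_Kc_bound hfin.toFinset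
    exact ⟨c, fun x hx => hcb x (hfin.mem_toFinset.mpr hx)⟩
  have conj8 : (∃ c : ℕ, C.D j ⊆ Kc k c) → C.D j = Set.range zl := by
    rintro ⟨c, hc⟩
    have hL := hbdd_L ⟨c, hc⟩
    have hGi : ∀ i, ∀ g ∈ Gset C.prec (Dl i), g = 0 := by
      intro i g hg
      by_contra hgne
      have hgpos : C.prec 0 g := by
        rcases Gset_nonneg (hE i) hg with h0 | h0
        · exact absurd h0 hgne
        · exact h0
      obtain ⟨i0, hi0⟩ := Function.ne_iff.mp hgne
      have hi0' : (1:ℤ) ≤ |g i0| := Int.one_le_abs (by simpa using hi0)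
      set n := 2*c+1 with hn
      have hnG : n • g ∈ Gset C.prec (Dl i) := Gset_nsmul hord (hE i) hg n
      have hnpos : C.prec 0 (n • g) := pos_nsmul hord hgpos n (by omega)
      have hnD : n • g ∈ Dl i := by
        rcases (mem_Gset.mp hnG).1 with h0 | h0
        · exfalso; rw [h0] at hnpos; exact hord.irrefl 0 hnpos
        · exact h0
      have hmem : n • g + zl i ∈ C.D j := by
        rw [hDl i] at hnD
        exact (mem_shiftPos.mp hnD).1
      have hb1 := hc hmem i0
      have hb2 := hc (hzl i).1 i0
      have e : (n • g + zl i) i0 = ((n:ℤ)) * g i0 + zl i i0 := by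
        have e1 : (n • g + zl i) i0 = (n • g) i0 + zl i i0 := rfl
        have e2 : (n • g) i0 = (n:ℤ) * g i0 := by
          simp only [Pi.smul_apply, nsmul_eq_mul]
        rw [e1, e2]
      rw [e] at hb1
      have h3 : |(n:ℤ) * g i0| ≤ |(n:ℤ) * g i0 + zl i i0| + |zl i i0| := by
        calc |(n:ℤ) * g i0| = |((n:ℤ) * g i0 + zl i i0) + (-(zl i i0))| := by ring_nf
        _ ≤ |(n:ℤ) * g i0 + zl i i0| + |(-(zl i i0))| := abs_add_le _ _
        _ = |(n:ℤ) * g i0 + zl i i0| + |zl i i0| := by rw [abs_neg]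
      rw [abs_mul] at h3
      have h4 : |(n:ℤ)| = (n:ℤ) := abs_of_nonneg (by positivity)
      rw [h4] at h3
      have h5 : (n:ℤ) = 2*(c:ℤ)+1 := by rw [hn]; push_cast; ring
      nlinarith
    rw [partition]
    have hpos_empty : posPart C.prec (Lset C.prec (C.D j)) = ∅ := by
      rw [hL]
      ext x
      simp only [Set.mem_empty_iff_false, iff_false]
      intro hx
      obtain ⟨h1, h2⟩ := mem_posPart.mp hx
      rw [Set.mem_singleton_iff] at h1
      rw [h1] at h2
      exact hord.irrefl 0 h2
    have hcoset : ∀ i, posPart C.prec (tr (Lset C.prec (Dl i)) (zl i)) = {zl i} := by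
      intro i
      ext x
      simp only [Set.mem_singleton_iff]
      constructor
      · intro hx
        obtain ⟨h1, _⟩ := mem_posPart.mp hx
        have h3 := mem_tr.mp h1
        have h4 : x - zl i = 0 := by
          rcases mem_Lset.mp h3 with h5 | h5
          · exact hGi i _ h5
          · exact neg_eq_zero.mp (hGi i _ h5)
        exact sub_eq_zero.mp h4
      · intro h1
        subst h1
        refine mem_posPart.mpr ⟨mem_tr.mpr ?_, hD _ (hzl i).1⟩
        simpa using mem_Lset.mpr (Or.inl (zero_mem_Gset (hE i)))
    rw [hpos_empty]
    simp only [Set.empty_union]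
    ext x
    simp only [Set.mem_iUnion, Set.mem_range]
    constructor
    · rintro ⟨i, hi⟩
      rw [hcoset i] at hi
      exact ⟨i, (Set.mem_singleton_iff.mp hi).symm⟩
    · rintro ⟨i, hi⟩
      exact ⟨i, by rw [hcoset i]; exact Set.mem_singleton_iff.mpr hi.symm⟩
  exact ⟨⟨LsetSubgroup hord (C.D j) hD, rfl⟩, partition, disj1, disj2, mono, rank,
    ⟨hbdd_L, hL_bdd⟩, conj8⟩


end Paper
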